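/- For every y ∈ ℝ and every λ ≥ 0, the point x* = sgn(y) · max(|y| − λ/2, 0) is a global minimizer of the function x ↦ (y − x)² + λ|x| on ℝ; that is, (y − x*)² + λ|x*| ≤ (y − x)² + λ|x| for all x ∈ ℝ. -/
import Mathlib


/-- Soft thresholding operator: `Soft_v(y) = sgn(y) * max(|y| - v, 0)`. -/
noncomputable def softThreshold (v y : ℝ) : ℝ :=
  Real.sign y * max (|y| - v) 0

/-- For every `y ∈ ℝ` and `λ ≥ 0`, the point `x* = sgn(y) * max(|y| - λ/2, 0)` is a
global minimizer of `x ↦ (y - x)^2 + λ * |x|` on `ℝ`. -/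
theorem softThreshold_isGlobalMin (y l : ℝ) (hl : 0 ≤ l) (x : ℝ) :
    (y - softThreshold (l / 2) y) ^ 2 + l * |softThreshold (l / 2) y| ≤
      (y - x) ^ 2 + l * |x| := by
  unfold softThreshold
  rcases lt_trichotomy y 0 with hy | hy | hy
  · rw [Real.sign_of_neg hy, abs_of_neg hy]
    rcases le_or_gt (-y - l / 2) 0 with h | h
    · rw [max_eq_right h]
      simp only [mul_zero, abs_zero]
      rcases abs_cases x with ⟨hx, hx0⟩ | ⟨hx, hx0⟩ <;> rw [hx] <;>
        nlinarith [sq_nonneg x, sq_nonneg (y - x)]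
    · rw [max_eq_left h.le,
        show (-1 : ℝ) * (-y - l / 2) = y + l/2 by ring,
        abs_of_nonpos (by linarith : y + l/2 ≤ 0)]
      rcases abs_cases x with ⟨hx, hx0⟩ | ⟨hx, hx0⟩ <;> rw [hx] <;>
        nlinarith [sq_nonneg (y - x + l/2), sq_nonneg (y - x - l/2)]
  · subst hy
    simp only [Real.sign_zero, zero_mul, abs_zero, mul_zero, sub_zero, zero_sub]
    nlinarith [mul_nonneg hl (abs_nonneg x), sq_nonneg x, sq_abs x]
  · rw [Real.sign_of_pos hy, abs_of_pos hy]
    rcases le_or_gt (y - l / 2) 0 with h | h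
    · rw [max_eq_right h]
      simp only [mul_zero, abs_zero]
      rcases abs_cases x with ⟨hx, hx0⟩ | ⟨hx, hx0⟩ <;> rw [hx] <;>
        nlinarith [sq_nonneg x, sq_nonneg (y - x)]
    · rw [max_eq_left h.le, one_mul, abs_of_pos h]
      rcases abs_cases x with ⟨hx, hx0⟩ | ⟨hx, hx0⟩ <;> rw [hx] <;>
        nlinarith [sq_nonneg (y - x - l/2), sq_nonneg (y - x + l/2)]
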